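/- (Theorem 1.2(ii)(b), non-global existence.) Let h, l : [0,∞) → [0,∞) be continuous, and let f, g : [0,∞) → [0,∞) be locally Lipschitz continuous with f(0) = g(0) = 0. Let u₀ ∈ C_b(ℝ^N) be nonnegative with u₀ ≢ 0. Suppose g ∈ Φ and there exists τ > 0 such that ∫_{‖S(τ)u₀‖_∞}^∞ dσ/g(σ) ≤ ∫_0^τ l(σ) dσ. Then there is no global solution of problem (P) with initial data u₀. -/

import Mathlib

open MeasureTheory Real Set Metric Filter

noncomputable section

/-- `ℝ^N`. -/
abbrev EucN (N : ℕ) := EuclideanSpace ℝ (Fin N)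

/-- `C_b(ℝ^N)`, the bounded continuous functions with the sup norm. -/
abbrev CbN (N : ℕ) := BoundedContinuousFunction (EucN N) ℝ

/-- `u` is a global (mild) solution of problem (P)
`u_t - div(ω(x)∇u) = h(t) f(u) + l(t) g(u)`, `u(0) = u₀`, i.e.
`u ∈ C([0,∞), C_b(ℝ^N))`, `u ≥ 0`, and
`u(t) = S(t)u₀ + ∫_0^t S(t-σ)[h(σ) f(u(σ)) + l(σ) g(u(σ))] dσ` for all `t ≥ 0`,
written pointwise via the kernel `Γ`. -/
def IsGlobalSolution (N : ℕ) (Γ : EucN N → EucN N → ℝ → ℝ)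
    (h l f g : ℝ → ℝ) (u₀ : CbN N) (u : ℝ → CbN N) : Prop :=
  ContinuousOn u (Ici (0 : ℝ)) ∧ u 0 = u₀ ∧
    (∀ t : ℝ, 0 ≤ t → ∀ x, 0 ≤ u t x) ∧
    ∀ t : ℝ, 0 < t → ∀ x,
      u t x = (∫ y, Γ x y t * u₀ y) +
        ∫ σ in (0 : ℝ)..t, ∫ y, Γ x y (t - σ) *
          (h σ * f (u σ y) + l σ * g (u σ y))

private lemma measG {N : ℕ} {Γ : EucN N → EucN N → ℝ → ℝ}
    (hΓ : Measurable fun p : EucN N × EucN N × ℝ => Γ p.1 p.2.1 p.2.2)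
    {α : Type*} [MeasurableSpace α] {a b : α → EucN N} {c : α → ℝ}
    (ha : Measurable a) (hb : Measurable b) (hc : Measurable c) :
    Measurable fun q => Γ (a q) (b q) (c q) :=
  hΓ.comp (ha.prodMk (hb.prodMk hc))

private lemma contOn_of_locLip {f : ℝ → ℝ}
    (hf : ∀ M > (0 : ℝ), ∃ K : NNReal, LipschitzOnWith K f (Icc 0 M)) :
    ContinuousOn f (Ici 0) := by
  intro s hs
  simp only [mem_Ici] at hs
  obtain ⟨K, hK⟩ := hf (s + 1) (by linarith)
  have h1 : ContinuousWithinAt f (Icc 0 (s + 1)) s :=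
    hK.continuousOn s ⟨hs, by linarith⟩
  refine h1.mono_of_mem_nhdsWithin ?_
  rw [← Ici_inter_Iic]
  exact inter_mem_nhdsWithin _ (Iic_mem_nhds (by linarith))

set_option maxHeartbeats 2000000 in
/-- Theorem 1.2(ii)(b): if `g ∈ Φ` and the Osgood-type integral condition
holds at some time `τ > 0`, there is no global solution with data `u₀`. -/
theorem nonglobal_existence_g
    (N : ℕ) (hN : 1 ≤ N) (α : ℝ) (hα0 : 0 ≤ α) (hα1 : α < 1)
    (Γ : EucN N → EucN N → ℝ → ℝ)
    (hΓmeas : Measurable fun p : EucN N × EucN N × ℝ => Γ p.1 p.2.1 p.2.2)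
    (c₀ : ℝ) (hc₀ : 0 < c₀)
    (hK1y : ∀ (x : EucN N) (t : ℝ), 0 < t → ∫ y, Γ x y t = 1)
    (hK1x : ∀ (y : EucN N) (t : ℝ), 0 < t → ∫ x, Γ x y t = 1)
    (hK2 : ∀ (x y : EucN N) (s t : ℝ), 0 < s → s < t →
      Γ x y t = ∫ ξ, Γ x ξ (t - s) * Γ ξ y s)
    (hK5 : ∀ (x y : EucN N) (t : ℝ), 0 < t →
      0 < Γ x y t ∧ Γ x y t ≤ c₀ * t ^ (-(N : ℝ) / (2 - α)))
    (S : ℝ → CbN N → CbN N)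
    (hS0 : ∀ φ, S 0 φ = φ)
    (hSΓ : ∀ (φ : CbN N) (t : ℝ), 0 < t → ∀ x, S t φ x = ∫ y, Γ x y t * φ y)
    (hK4 : ∀ φ : CbN N, ContinuousOn (fun t => S t φ) (Ici (0 : ℝ)))
    (h l : ℝ → ℝ)
    (hhcont : ContinuousOn h (Ici 0)) (hlcont : ContinuousOn l (Ici 0))
    (hhnn : ∀ t, 0 ≤ t → 0 ≤ h t) (hlnn : ∀ t, 0 ≤ t → 0 ≤ l t)
    (f g : ℝ → ℝ)
    (hfLip : ∀ M > (0 : ℝ), ∃ K : NNReal, LipschitzOnWith K f (Icc 0 M))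
    (hgLip : ∀ M > (0 : ℝ), ∃ K : NNReal, LipschitzOnWith K g (Icc 0 M))
    (hfnn : ∀ s, 0 ≤ s → 0 ≤ f s) (hgnn : ∀ s, 0 ≤ s → 0 ≤ g s)
    (hf0 : f 0 = 0) (hg0 : g 0 = 0)
    (u₀ : CbN N) (hu₀nn : ∀ x, 0 ≤ u₀ x) (hu₀ne : u₀ ≠ 0)
    -- `g ∈ Φ`:
    (hgOsgood : ∀ z > (0 : ℝ), IntegrableOn (fun σ => 1 / g σ) (Ioi z))
    (hgJensen : ∀ v₀ : CbN N, (∀ x, 0 ≤ v₀ x) → ∀ t > (0 : ℝ), ∀ x,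
      g (S t v₀ x) ≤ ∫ y, Γ x y t * g (v₀ y))
    (hgmono : MonotoneOn g (Ici 0)) (hgpos : ∀ s > (0 : ℝ), 0 < g s)
    -- the blow-up condition:
    (τ : ℝ) (hτ : 0 < τ)
    (hcond : (∫ σ in Ioi ‖S τ u₀‖, 1 / g σ) ≤ ∫ σ in (0 : ℝ)..τ, l σ) :
    ¬ ∃ u : ℝ → CbN N, IsGlobalSolution N Γ h l f g u₀ u := by
  rintro ⟨u, hucont, hu00, hunn, hueq⟩
  -- basic kernel facts
  have hKpos : ∀ (x y : EucN N) (t : ℝ), 0 < t → 0 < Γ x y t :=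
    fun x y t ht => (hK5 x y t ht).1
  have hKnn : ∀ (x y : EucN N) (t : ℝ), 0 < t → 0 ≤ Γ x y t :=
    fun x y t ht => (hKpos x y t ht).le
  have hKint : ∀ (x : EucN N) (t : ℝ), 0 < t → Integrable (fun y => Γ x y t) :=
    fun x t ht => integrable_of_integral_eq_one (hK1y x t ht)
  have hKmeas : ∀ (x : EucN N) (t : ℝ), Measurable fun y => Γ x y t :=
    fun x t => measG hΓmeas measurable_const measurable_id measurable_const
  have hmulint : ∀ (x : EucN N) (t : ℝ), 0 < t → ∀ (φ : EucN N → ℝ),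
      AEStronglyMeasurable φ volume → ∀ C : ℝ, (∀ ξ, |φ ξ| ≤ C) →
      Integrable fun ξ => Γ x ξ t * φ ξ := by
    intro x t ht φ hφ C hC
    refine Integrable.mono' ((hKint x t ht).mul_const C)
      ((hKmeas x t).aestronglyMeasurable.mul hφ) (ae_of_all _ fun ξ => ?_)
    rw [Real.norm_eq_abs, abs_mul, abs_of_nonneg (hKnn x ξ t ht)]
    exact mul_le_mul_of_nonneg_left (hC ξ) (hKnn x ξ t ht)
  have hmulintC : ∀ (x : EucN N) (t : ℝ), 0 < t → ∀ φ : CbN N,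
      Integrable fun ξ => Γ x ξ t * φ ξ := fun x t ht φ =>
    hmulint x t ht φ φ.continuous.measurable.aestronglyMeasurable ‖φ‖
      (fun ξ => by simpa [Real.norm_eq_abs] using φ.norm_coe_le_norm ξ)
  -- averaging bound
  have hker_avg : ∀ (x : EucN N) (r : ℝ), 0 < r → ∀ (φ : EucN N → ℝ),
      AEStronglyMeasurable φ volume → (∀ ξ, 0 ≤ φ ξ) → ∀ C : ℝ, (∀ ξ, φ ξ ≤ C) →
      0 ≤ (∫ ξ, Γ x ξ r * φ ξ) ∧ (∫ ξ, Γ x ξ r * φ ξ) ≤ C := by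
    intro x r hr φ hφm hφnn C hφC
    constructor
    · exact integral_nonneg fun ξ => mul_nonneg (hKnn x ξ r hr) (hφnn ξ)
    · calc (∫ ξ, Γ x ξ r * φ ξ) ≤ ∫ ξ, Γ x ξ r * C := by
            refine integral_mono (hmulint x r hr φ hφm C
              (fun ξ => by rw [abs_of_nonneg (hφnn ξ)]; exact hφC ξ))
              ((hKint x r hr).mul_const C) (fun ξ =>
              mul_le_mul_of_nonneg_left (hφC ξ) (hKnn x ξ r hr))
        _ = C := by rw [integral_mul_const, hK1y x r hr, one_mul]
  -- nonnegativity of S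
  have hSnn : ∀ (r : ℝ), 0 ≤ r → ∀ φ : CbN N, (∀ ξ, 0 ≤ φ ξ) → ∀ x, 0 ≤ S r φ x := by
    intro r hr φ hφ x
    rcases hr.eq_or_lt with rfl | hr
    · rw [hS0]; exact hφ x
    · rw [hSΓ φ r hr x]
      exact integral_nonneg fun ξ => mul_nonneg (hKnn x ξ r hr) (hφ ξ)
  -- Chapman-Kolmogorov with Fubini
  have hcompF : ∀ (φ : EucN N → ℝ), Measurable φ → ∀ C : ℝ, (∀ ξ, |φ ξ| ≤ C) →
      ∀ (x : EucN N) (s t : ℝ), 0 < s → s < t →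
      (∫ y, Γ x y (t - s) * ∫ ξ, Γ y ξ s * φ ξ) = ∫ ξ, Γ x ξ t * φ ξ := by
    intro φ hφm C hφC x s t hs hst
    have hts : 0 < t - s := sub_pos.2 hst
    have hCnn : 0 ≤ C := le_trans (abs_nonneg _) (hφC 0)
    have hFnmeas : Measurable fun p : EucN N × EucN N =>
        Γ x p.1 (t - s) * (Γ p.1 p.2 s * φ p.2) :=
      (measG hΓmeas measurable_const measurable_fst measurable_const).mul
        ((measG hΓmeas measurable_fst measurable_snd measurable_const).mul
          (hφm.comp measurable_snd))
    have h1 : ∀ y : EucN N, Integrable fun ξ => Γ x y (t - s) * (Γ y ξ s * φ ξ) :=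
      fun y => (hmulint y s hs φ hφm.aestronglyMeasurable C hφC).const_mul _
    have h2 : Integrable fun y => ∫ ξ, ‖Γ x y (t - s) * (Γ y ξ s * φ ξ)‖ := by
      refine Integrable.mono' ((hKint x (t - s) hts).mul_const C)
        hFnmeas.norm.stronglyMeasurable.integral_prod_right'.aestronglyMeasurable
        (ae_of_all _ fun y => ?_)
      rw [Real.norm_eq_abs, abs_of_nonneg (integral_nonneg fun ξ => norm_nonneg _)]
      calc (∫ ξ, ‖Γ x y (t - s) * (Γ y ξ s * φ ξ)‖)
          ≤ ∫ ξ, Γ x y (t - s) * (Γ y ξ s * C) := by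
            refine integral_mono (h1 y).norm
              (((hKint y s hs).mul_const C).const_mul _) (fun ξ => ?_)
            rw [Real.norm_eq_abs, abs_mul, abs_of_nonneg (hKnn x y (t - s) hts), abs_mul,
              abs_of_nonneg (hKnn y ξ s hs)]
            exact mul_le_mul_of_nonneg_left
              (mul_le_mul_of_nonneg_left (hφC ξ) (hKnn y ξ s hs)) (hKnn x y (t - s) hts)
        _ = Γ x y (t - s) * C := by
            rw [integral_const_mul, integral_mul_const, hK1y y s hs, one_mul]
    have hFnint : Integrable (Function.uncurry fun y ξ =>
        Γ x y (t - s) * (Γ y ξ s * φ ξ)) (volume.prod volume) := by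
      refine (integrable_prod_iff hFnmeas.aestronglyMeasurable).2 ⟨ae_of_all _ h1, h2⟩
    calc (∫ y, Γ x y (t - s) * ∫ ξ, Γ y ξ s * φ ξ)
        = ∫ y, ∫ ξ, Γ x y (t - s) * (Γ y ξ s * φ ξ) := by
          congr 1; funext y; rw [integral_const_mul]
      _ = ∫ ξ, ∫ y, Γ x y (t - s) * (Γ y ξ s * φ ξ) := integral_integral_swap hFnint
      _ = ∫ ξ, (∫ y, Γ x y (t - s) * Γ y ξ s) * φ ξ := by
          congr 1; funext ξ
          rw [← integral_mul_const]
          congr 1; funext y; ring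
      _ = ∫ ξ, Γ x ξ t * φ ξ := by
          congr 1; funext ξ
          rw [← hK2 x ξ s t hs hst]
  -- continuity of f, g on [0,∞)
  have hfc : ContinuousOn f (Ici 0) := contOn_of_locLip hfLip
  have hgc : ContinuousOn g (Ici 0) := contOn_of_locLip hgLip
  -- clamped data
  set U : ℝ → CbN N := fun t => u (max t 0) with hUdef
  have hUcont : Continuous U :=
    hucont.comp_continuous (continuous_id.max continuous_const) fun t => mem_Ici.2 (le_max_right _ _)
  have hUeq : ∀ t, 0 ≤ t → U t = u t := fun t ht => by
    simp only [hUdef]; rw [max_eq_left ht]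
  have hUnn : ∀ t x, 0 ≤ U t x := fun t x => hunn _ (le_max_right _ _) x
  set H : ℝ → ℝ := fun t => h (max t 0) with hHdef
  set L : ℝ → ℝ := fun t => l (max t 0) with hLdef
  have hHcont : Continuous H :=
    hhcont.comp_continuous (continuous_id.max continuous_const) fun t => mem_Ici.2 (le_max_right _ _)
  have hLcont : Continuous L :=
    hlcont.comp_continuous (continuous_id.max continuous_const) fun t => mem_Ici.2 (le_max_right _ _)
  have hHnn : ∀ t, 0 ≤ H t := fun t => hhnn _ (le_max_right _ _)
  have hLnn : ∀ t, 0 ≤ L t := fun t => hlnn _ (le_max_right _ _)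
  set F : ℝ → EucN N → ℝ := fun σ ξ => H σ * f (U σ ξ) + L σ * g (U σ ξ) with hFdef
  have hUev : Continuous fun p : ℝ × EucN N => U p.1 p.2 :=
    continuous_eval.comp
      ((hUcont.comp continuous_fst).prodMk continuous_snd)
  have hFc : Continuous fun p : ℝ × EucN N => F p.1 p.2 := by
    refine ((hHcont.comp continuous_fst).mul
      (hfc.comp_continuous hUev fun p => hUnn p.1 p.2)).add
      ((hLcont.comp continuous_fst).mul
      (hgc.comp_continuous hUev fun p => hUnn p.1 p.2))
  have hFnn : ∀ σ ξ, 0 ≤ F σ ξ := fun σ ξ =>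
    add_nonneg (mul_nonneg (hHnn σ) (hfnn _ (hUnn σ ξ)))
      (mul_nonneg (hLnn σ) (hgnn _ (hUnn σ ξ)))
  -- bounds on compact time interval
  obtain ⟨Mu, hMu⟩ := (isCompact_Icc (a := (0:ℝ)) (b := τ)).exists_bound_of_continuousOn
    (hucont.mono fun x hx => hx.1)
  have hMu0 : 0 ≤ Mu := le_trans (norm_nonneg _) (hMu 0 ⟨le_rfl, hτ.le⟩)
  obtain ⟨Cf, hCf⟩ := (isCompact_Icc (a := (0:ℝ)) (b := Mu)).exists_bound_of_continuousOn
    (hfc.mono fun x hx => hx.1)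
  obtain ⟨Cg, hCg⟩ := (isCompact_Icc (a := (0:ℝ)) (b := Mu)).exists_bound_of_continuousOn
    (hgc.mono fun x hx => hx.1)
  obtain ⟨Ch, hCh⟩ := (isCompact_Icc (a := (0:ℝ)) (b := τ)).exists_bound_of_continuousOn
    (hhcont.mono fun x hx => hx.1)
  obtain ⟨Cl, hCl⟩ := (isCompact_Icc (a := (0:ℝ)) (b := τ)).exists_bound_of_continuousOn
    (hlcont.mono fun x hx => hx.1)
  have hCf0 : 0 ≤ Cf := le_trans (norm_nonneg _) (hCf 0 ⟨le_rfl, hMu0⟩)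
  have hCg0 : 0 ≤ Cg := le_trans (norm_nonneg _) (hCg 0 ⟨le_rfl, hMu0⟩)
  have hCh0 : 0 ≤ Ch := le_trans (norm_nonneg _) (hCh 0 ⟨le_rfl, hτ.le⟩)
  have hCl0 : 0 ≤ Cl := le_trans (norm_nonneg _) (hCl 0 ⟨le_rfl, hτ.le⟩)
  set CF : ℝ := Ch * Cf + Cl * Cg with hCFdef
  have hCF0 : 0 ≤ CF := add_nonneg (mul_nonneg hCh0 hCf0) (mul_nonneg hCl0 hCg0)
  have humem : ∀ σ, σ ∈ Icc (0:ℝ) τ → ∀ ξ, u σ ξ ∈ Icc (0:ℝ) Mu := by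
    intro σ hσ ξ
    exact ⟨hunn σ hσ.1 ξ, le_trans (le_abs_self _)
      (le_trans ((u σ).norm_coe_le_norm ξ) (hMu σ hσ))⟩
  have hFbd : ∀ σ, σ ∈ Icc (0:ℝ) τ → ∀ ξ, F σ ξ ≤ CF := by
    intro σ hσ ξ
    have hm : max σ 0 = σ := max_eq_left hσ.1
    have h1 : H σ * f (U σ ξ) ≤ Ch * Cf := by
      simp only [hHdef, hUdef, hm]
      exact mul_le_mul (le_trans (le_abs_self _) (hCh σ hσ))
        (le_trans (le_abs_self _) (hCf _ (humem σ hσ ξ))) (hfnn _ (hunn σ hσ.1 ξ)) hCh0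
    have h2 : L σ * g (U σ ξ) ≤ Cl * Cg := by
      simp only [hLdef, hUdef, hm]
      exact mul_le_mul (le_trans (le_abs_self _) (hCl σ hσ))
        (le_trans (le_abs_self _) (hCg _ (humem σ hσ ξ))) (hgnn _ (hunn σ hσ.1 ξ)) hCl0
    simp only [hFdef, hCFdef]
    linarith
  -- Duhamel formula with clamped source term
  have hDuh : ∀ t, 0 < t → t ≤ τ → ∀ y, u t y =
      (∫ ξ, Γ y ξ t * u₀ ξ) + ∫ σ in (0:ℝ)..t, ∫ ξ, Γ y ξ (t - σ) * F σ ξ := by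
    intro t ht htτ y
    rw [hueq t ht y]
    congr 1
    refine intervalIntegral.integral_congr fun σ hσ => ?_
    rw [uIcc_of_le ht.le] at hσ
    have hm : max σ 0 = σ := max_eq_left hσ.1
    congr 1
    funext ξ
    simp only [hFdef, hHdef, hLdef, hUdef, hm]
  -- positivity of S τ u₀
  have hSpos : ∀ x : EucN N, 0 < S τ u₀ x := by
    intro x
    rw [hSΓ u₀ τ hτ x]
    obtain ⟨y₀, hy₀⟩ : ∃ y₀, 0 < u₀ y₀ := by
      by_contra hc
      push_neg at hc
      exact hu₀ne (BoundedContinuousFunction.ext fun y =>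
        le_antisymm (hc y) (hu₀nn y))
    have hV : IsOpen {y : EucN N | 0 < u₀ y} := isOpen_lt continuous_const u₀.continuous
    have hVpos : 0 < volume {y : EucN N | 0 < u₀ y} := hV.measure_pos volume ⟨y₀, hy₀⟩
    rw [integral_pos_iff_support_of_nonneg
      (fun y => mul_nonneg (hKnn x y τ hτ) (hu₀nn y)) (hmulintC x τ hτ u₀)]
    exact lt_of_lt_of_le hVpos (measure_mono fun y hy =>
      ne_of_gt (mul_pos (hKpos x y τ hτ) hy))
  set b : ℝ := ‖S τ u₀‖ with hbdef
  have hbpos : 0 < b :=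
    lt_of_lt_of_le (hSpos 0) (le_trans (le_abs_self _) ((S τ u₀).norm_coe_le_norm 0))
  set Gf : ℝ → ℝ := fun s => ∫ σ in Ioi s, 1 / g σ with hGdef
  have hGpos : ∀ s, 0 < s → 0 < Gf s := by
    intro s hs
    rw [hGdef]
    rw [setIntegral_pos_iff_support_of_nonneg_ae
      ((ae_restrict_iff' measurableSet_Ioi).2 (ae_of_all _ fun σ hσ =>
        le_of_lt (div_pos one_pos (hgpos σ (hs.trans hσ)))))
      (hgOsgood s hs)]
    have hIoi : (0:ENNReal) < volume (Ioi s) := by simp [Real.volume_Ioi]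
    exact lt_of_lt_of_le hIoi (measure_mono fun σ hσ =>
      ⟨ne_of_gt (div_pos one_pos (hgpos σ (hs.trans hσ))), hσ⟩)
  have hGanti : ∀ p q : ℝ, 0 < p → p ≤ q → Gf q ≤ Gf p := by
    intro p q hp hpq
    refine setIntegral_mono_set (hgOsgood p hp)
      ((ae_restrict_iff' measurableSet_Ioi).2 (ae_of_all _ fun σ hσ =>
        le_of_lt (div_pos one_pos (hgpos σ (hp.trans hσ)))))
      (HasSubset.Subset.eventuallyLE (Ioi_subset_Ioi hpq))
  have hGsplit : ∀ p q : ℝ, 0 < p → p ≤ q →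
      Gf p = (∫ σ in Ioc p q, 1 / g σ) + Gf q := by
    intro p q hp hpq
    have hu : Ioc p q ∪ Ioi q = Ioi p := Ioc_union_Ioi_eq_Ioi hpq
    simp only [hGdef]
    rw [← hu, setIntegral_union (Ioc_disjoint_Ioi le_rfl) measurableSet_Ioi
      ((hgOsgood p hp).mono_set (by rw [← hu]; exact subset_union_left))
      ((hgOsgood p hp).mono_set (by rw [← hu]; exact subset_union_right))]
  set M₂ : ℝ := max ‖u τ‖ b with hM₂def
  have hM₂pos : 0 < M₂ := lt_of_lt_of_le hbpos (le_max_right _ _)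
  have hgb2 : 0 < g (b / 2) := hgpos _ (by linarith)
  set ε : ℝ := min (b / 2) (g (b / 2) * Gf M₂ / 2) with hεdef
  have hεpos : 0 < ε := lt_min (by linarith)
    (by have := hGpos M₂ hM₂pos; positivity)
  have hεb2 : ε ≤ b / 2 := min_le_left _ _
  obtain ⟨x₀, hx₀⟩ : ∃ x₀ : EucN N, b - ε ≤ S τ u₀ x₀ := by
    by_contra hcon
    push_neg at hcon
    have hle : ‖S τ u₀‖ ≤ b - ε := by
      refine (BoundedContinuousFunction.norm_le (by linarith)).2 fun x => ?_
      rw [Real.norm_eq_abs, abs_of_nonneg (hSpos x).le]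
      exact (hcon x).le
    rw [← hbdef] at hle
    linarith
  set a : ℝ := S τ u₀ x₀ with hadef
  have hapos : 0 < a := lt_of_lt_of_le (by linarith) hx₀
  have hab : a ≤ b := le_trans (le_abs_self _) ((S τ u₀).norm_coe_le_norm x₀)
  -- contraction property of S at x₀
  have hScontr : ∀ r : ℝ, 0 ≤ r → ∀ φ ψ : CbN N, |S r φ x₀ - S r ψ x₀| ≤ ‖φ - ψ‖ := by
    intro r hr φ ψ
    rcases hr.eq_or_lt with rfl | hr
    · rw [hS0, hS0]
      simpa [Real.norm_eq_abs] using (φ - ψ).norm_coe_le_norm x₀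
    · rw [hSΓ _ _ hr, hSΓ _ _ hr, ← integral_sub (hmulintC x₀ r hr φ) (hmulintC x₀ r hr ψ)]
      have he : ∀ y, Γ x₀ y r * φ y - Γ x₀ y r * ψ y = Γ x₀ y r * (φ - ψ) y := fun y => by
        simp [BoundedContinuousFunction.sub_apply]; ring
      simp_rw [he]
      calc |∫ y, Γ x₀ y r * (φ - ψ) y|
          ≤ ∫ y, Γ x₀ y r * ‖φ - ψ‖ := by
            rw [← Real.norm_eq_abs]
            refine le_trans (norm_integral_le_integral_norm _)
              (integral_mono (hmulintC x₀ r hr (φ - ψ)).norm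
                ((hKint x₀ r hr).mul_const _) fun y => ?_)
            rw [Real.norm_eq_abs, abs_mul, abs_of_nonneg (hKnn x₀ y r hr)]
            exact mul_le_mul_of_nonneg_left
              (by simpa [Real.norm_eq_abs] using (φ - ψ).norm_coe_le_norm y) (hKnn x₀ y r hr)
        _ = ‖φ - ψ‖ := by rw [integral_mul_const, hK1y x₀ r hr, one_mul]
  -- the comparison function z
  set z : ℝ → ℝ := fun t => S (τ - t) (U t) x₀ with hzdef
  have hznn : ∀ t, t ≤ τ → 0 ≤ z t := fun t ht =>
    hSnn _ (by linarith) _ (hUnn t) x₀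
  have hzeq : ∀ t, 0 ≤ t → z t = S (τ - t) (u t) x₀ := fun t ht => by
    simp only [hzdef]; rw [hUeq t ht]
  have hz0 : z 0 = a := by
    rw [hzeq 0 le_rfl, hu00]; simp [hadef]
  have hzτ : z τ = u τ x₀ := by
    rw [hzeq τ hτ.le]; simp [hS0]
  have hzcont : ContinuousOn z (Icc 0 τ) := by
    intro s hs
    have hUs : U s = u s := hUeq s hs.1
    have e : ContinuousWithinAt (fun t => S (τ - t) (u s) x₀) (Icc 0 τ) s := by
      have e1 : ContinuousOn (fun t : ℝ => S (τ - t) (u s)) (Icc 0 τ) :=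
        (hK4 (u s)).comp (continuous_const.sub continuous_id).continuousOn
          (fun t ht => by simp only [mem_Ici]; linarith [ht.2])
      exact ((continuous_eval_const (x := x₀)).comp_continuousOn
        e1) s hs
    have d0 : Tendsto (fun t => S (τ - t) (U t) x₀ - S (τ - t) (u s) x₀)
        (nhdsWithin s (Icc 0 τ)) (nhds 0) := by
      apply squeeze_zero_norm'
      · filter_upwards [self_mem_nhdsWithin] with t ht
        simpa [Real.norm_eq_abs] using hScontr (τ - t) (by linarith [ht.2]) (U t) (u s)
      · have htd : Tendsto (fun t => ‖U t - u s‖) (nhdsWithin s (Icc 0 τ))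
            (nhds ‖U s - u s‖) :=
          ((hUcont.sub continuous_const).norm.continuousAt).continuousWithinAt
        rw [hUs] at htd
        simpa using htd
    have hsum := d0.add e
    rw [zero_add] at hsum
    show Tendsto z (nhdsWithin s (Icc 0 τ)) (nhds (z s))
    rw [hzeq s hs.1]
    exact hsum.congr fun t => by simp only [hzdef]; ring
  -- the function D
  set D : ℝ → ℝ := fun σ => ∫ ξ, Γ x₀ ξ (τ - σ) * F σ ξ with hDdef
  have hFmeas : ∀ σ : ℝ, Measurable (F σ) := fun σ =>
    (hFc.comp (Continuous.prodMk_right σ)).measurable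
  have hFabs : ∀ σ, σ ∈ Icc (0:ℝ) τ → ∀ ξ, |F σ ξ| ≤ CF := fun σ hσ ξ => by
    rw [abs_of_nonneg (hFnn σ ξ)]; exact hFbd σ hσ ξ
  have hDbounds : ∀ σ, σ ∈ Ico (0:ℝ) τ → 0 ≤ D σ ∧ D σ ≤ CF := by
    intro σ hσ
    simp only [hDdef]
    exact hker_avg x₀ (τ - σ) (by linarith [hσ.2]) (F σ)
      (hFmeas σ).aestronglyMeasurable (hFnn σ) CF (hFbd σ ⟨hσ.1, hσ.2.le⟩)
  have hDmeas : StronglyMeasurable D := by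
    have hjm : Measurable fun p : ℝ × EucN N => Γ x₀ p.2 (τ - p.1) * F p.1 p.2 :=
      (measG hΓmeas measurable_const measurable_snd
        (measurable_const.sub measurable_fst)).mul hFc.measurable
    rw [hDdef]
    exact hjm.stronglyMeasurable.integral_prod_right'
  -- master identity
  have hmaster : ∀ t, t ∈ Ioc (0:ℝ) τ → z t = a + ∫ σ in (0:ℝ)..t, D σ := by
    rintro t ⟨ht, htτ⟩
    rcases eq_or_lt_of_le htτ with heq | htlt
    · subst heq
      simp only [hDdef]
      rw [hzτ, hDuh t ht le_rfl x₀, hadef, hSΓ u₀ t ht x₀]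
    · have hts : 0 < τ - t := sub_pos.2 htlt
      set c : ℝ → EucN N → ℝ := fun σ y => ∫ ξ, Γ y ξ (t - σ) * F σ ξ with hcdef
      have hcjm : Measurable fun p : EucN N × ℝ => c p.2 p.1 := by
        have hj : Measurable fun q : (EucN N × ℝ) × EucN N =>
            Γ q.1.1 q.2 (t - q.1.2) * F q.1.2 q.2 :=
          (measG hΓmeas (measurable_fst.comp measurable_fst) measurable_snd
            (measurable_const.sub (measurable_snd.comp measurable_fst))).mul
            (hFc.measurable.comp ((measurable_snd.comp measurable_fst).prodMk
              measurable_snd))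
        simp only [hcdef]
        exact hj.stronglyMeasurable.integral_prod_right'.measurable
      have hcbd : ∀ σ, σ ∈ Ioo (0:ℝ) t → ∀ y, 0 ≤ c σ y ∧ c σ y ≤ CF := by
        intro σ hσ y
        simp only [hcdef]
        exact hker_avg y (t - σ) (by linarith [hσ.2]) (F σ)
          (hFmeas σ).aestronglyMeasurable (hFnn σ) CF
          (hFbd σ ⟨hσ.1.le, by linarith [hσ.2]⟩)
      have hBeq : ∀ y, u t y = S t u₀ y + ∫ σ in Ioo (0:ℝ) t, c σ y := by
        intro y
        simp only [hcdef]
        rw [hDuh t ht htlt.le y, ← hSΓ u₀ t ht y, intervalIntegral.integral_of_le ht.le,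
          integral_Ioc_eq_integral_Ioo]
      have hKA : Integrable fun y => Γ x₀ y (τ - t) * S t u₀ y := hmulintC x₀ _ hts (S t u₀)
      have hKu : Integrable fun y => Γ x₀ y (τ - t) * u t y := hmulintC x₀ _ hts (u t)
      have hKB : Integrable fun y => Γ x₀ y (τ - t) * ∫ σ in Ioo (0:ℝ) t, c σ y := by
        have he : (fun y => Γ x₀ y (τ - t) * ∫ σ in Ioo (0:ℝ) t, c σ y) =
            fun y => Γ x₀ y (τ - t) * u t y - Γ x₀ y (τ - t) * S t u₀ y := by
          funext y; rw [hBeq y]; ring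
        rw [he]; exact hKu.sub hKA
      have hν : volume (Ioo (0:ℝ) t) < ⊤ := by simp [Real.volume_Ioo]
      have hm : Measurable (Function.uncurry fun y σ => Γ x₀ y (τ - t) * c σ y) :=
        (measG hΓmeas measurable_const measurable_fst measurable_const).mul hcjm
      have hslice : ∀ y : EucN N, Integrable (fun σ => Γ x₀ y (τ - t) * c σ y)
          (volume.restrict (Ioo (0:ℝ) t)) := by
        intro y
        refine Integrable.mono' ((integrableOn_const (C := |Γ x₀ y (τ - t)| * CF) hν.ne))
          ((hcjm.comp (measurable_const.prodMk measurable_id)).const_mul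
            _).aestronglyMeasurable
          ((ae_restrict_iff' measurableSet_Ioo).2 (ae_of_all _ fun σ hσ => ?_))
        rw [Real.norm_eq_abs, abs_mul]
        refine mul_le_mul_of_nonneg_left ?_ (abs_nonneg _)
        rw [abs_of_nonneg (hcbd σ hσ y).1]
        exact (hcbd σ hσ y).2
      have hnormint : Integrable fun y => ∫ σ in Ioo (0:ℝ) t, ‖Γ x₀ y (τ - t) * c σ y‖ := by
        refine Integrable.mono' ((hKint x₀ (τ - t) hts).mul_const (CF * t))
          hm.stronglyMeasurable.norm.integral_prod_right'.aestronglyMeasurable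
          (ae_of_all _ fun y => ?_)
        rw [Real.norm_eq_abs, abs_of_nonneg (integral_nonneg fun σ => norm_nonneg _)]
        calc (∫ σ in Ioo (0:ℝ) t, ‖Γ x₀ y (τ - t) * c σ y‖)
            ≤ ∫ σ in Ioo (0:ℝ) t, Γ x₀ y (τ - t) * CF := by
              refine setIntegral_mono_on ((hslice y).norm) (integrableOn_const hν.ne)
                measurableSet_Ioo fun σ hσ => ?_
              rw [Real.norm_eq_abs, abs_mul, abs_of_nonneg (hKnn x₀ y _ hts),
                abs_of_nonneg (hcbd σ hσ y).1]
              exact mul_le_mul_of_nonneg_left (hcbd σ hσ y).2 (hKnn x₀ y _ hts)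
          _ = Γ x₀ y (τ - t) * (CF * t) := by
              rw [setIntegral_const, smul_eq_mul, measureReal_def, Real.volume_Ioo, sub_zero,
                ENNReal.toReal_ofReal ht.le]
              ring
      have hprod : Integrable (Function.uncurry fun y σ => Γ x₀ y (τ - t) * c σ y)
          (volume.prod (volume.restrict (Ioo (0:ℝ) t))) :=
        (integrable_prod_iff hm.aestronglyMeasurable).2 ⟨ae_of_all _ hslice, hnormint⟩
      have hswap : (∫ y, Γ x₀ y (τ - t) * ∫ σ in Ioo (0:ℝ) t, c σ y) =
          ∫ σ in Ioo (0:ℝ) t, ∫ y, Γ x₀ y (τ - t) * c σ y := by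
        have h1 : (∫ y, Γ x₀ y (τ - t) * ∫ σ in Ioo (0:ℝ) t, c σ y) =
            ∫ y, ∫ σ in Ioo (0:ℝ) t, Γ x₀ y (τ - t) * c σ y := by
          congr 1; funext y; rw [integral_const_mul]
        rw [h1]
        exact integral_integral_swap hprod
      have hid : ∀ σ, σ ∈ Ioo (0:ℝ) t → (∫ y, Γ x₀ y (τ - t) * c σ y) = D σ := by
        intro σ hσ
        have h1 : (0:ℝ) < t - σ := by linarith [hσ.2]
        have h2 : t - σ < τ - σ := by linarith
        have h4 := hcompF (F σ) (hFmeas σ) CF (hFabs σ ⟨hσ.1.le, by linarith [hσ.2]⟩)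
          x₀ (t - σ) (τ - σ) h1 h2
        have h3 : τ - σ - (t - σ) = τ - t := by ring
        rw [h3] at h4
        simpa [hcdef, hDdef] using h4
      have e1 : z t = ∫ y, Γ x₀ y (τ - t) * u t y := by
        rw [hzeq t ht.le, hSΓ _ _ hts]
      have e2 : (∫ y, Γ x₀ y (τ - t) * u t y) =
          (∫ y, Γ x₀ y (τ - t) * S t u₀ y) +
            ∫ y, Γ x₀ y (τ - t) * ∫ σ in Ioo (0:ℝ) t, c σ y := by
        rw [← integral_add hKA hKB]
        congr 1; funext y; rw [hBeq y]; ring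
      have e3 : (∫ y, Γ x₀ y (τ - t) * S t u₀ y) = a := by
        have h4 := hcompF u₀ u₀.continuous.measurable ‖u₀‖
          (fun ξ => by simpa [Real.norm_eq_abs] using u₀.norm_coe_le_norm ξ)
          x₀ t τ ht htlt
        rw [hadef, hSΓ u₀ τ hτ x₀, ← h4]
        congr 1; funext y; rw [hSΓ u₀ t ht y]
      rw [e1, e2, e3, hswap]
      congr 1
      rw [intervalIntegral.integral_of_le ht.le, integral_Ioc_eq_integral_Ioo]
      exact setIntegral_congr_fun measurableSet_Ioo fun σ hσ => hid σ hσ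
  -- lower bound for D
  have hDlow : ∀ σ, σ ∈ Ico (0:ℝ) τ → L σ * g (z σ) ≤ D σ := by
    intro σ hσ
    have hτσ : 0 < τ - σ := by linarith [hσ.2]
    have hgu_m : Measurable fun ξ => g (u σ ξ) :=
      (hgc.comp_continuous (u σ).continuous fun ξ => hunn σ hσ.1 ξ).measurable
    have hgu_bd : ∀ ξ, |g (u σ ξ)| ≤ Cg := fun ξ => by
      rw [abs_of_nonneg (hgnn _ (hunn σ hσ.1 ξ))]
      exact le_trans (le_abs_self _) (hCg _ (humem σ ⟨hσ.1, hσ.2.le⟩ ξ))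
    have hint2 : Integrable fun ξ => Γ x₀ ξ (τ - σ) * g (u σ ξ) :=
      hmulint x₀ _ hτσ _ hgu_m.aestronglyMeasurable Cg hgu_bd
    have hint1 : Integrable fun ξ => Γ x₀ ξ (τ - σ) * F σ ξ :=
      hmulint x₀ _ hτσ (F σ) (hFmeas σ).aestronglyMeasurable CF (hFabs σ ⟨hσ.1, hσ.2.le⟩)
    have step1 : L σ * ∫ ξ, Γ x₀ ξ (τ - σ) * g (u σ ξ) ≤ D σ := by
      simp only [hDdef]
      rw [← integral_const_mul]
      refine integral_mono (hint2.const_mul _) hint1 fun ξ => ?_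
      have hFσ : F σ ξ = H σ * f (u σ ξ) + L σ * g (u σ ξ) := by
        simp only [hFdef, hUdef]; rw [max_eq_left hσ.1]
      rw [hFσ]
      calc L σ * (Γ x₀ ξ (τ - σ) * g (u σ ξ))
          = Γ x₀ ξ (τ - σ) * (L σ * g (u σ ξ)) := by ring
        _ ≤ Γ x₀ ξ (τ - σ) * (H σ * f (u σ ξ) + L σ * g (u σ ξ)) := by
            refine mul_le_mul_of_nonneg_left ?_ (hKnn _ _ _ hτσ)
            exact le_add_of_nonneg_left (mul_nonneg (hHnn σ) (hfnn _ (hunn σ hσ.1 ξ)))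
    have step2 : g (z σ) ≤ ∫ ξ, Γ x₀ ξ (τ - σ) * g (u σ ξ) := by
      rw [hzeq σ hσ.1]
      exact hgJensen (u σ) (hunn σ hσ.1) (τ - σ) hτσ x₀
    calc L σ * g (z σ) ≤ L σ * ∫ ξ, Γ x₀ ξ (τ - σ) * g (u σ ξ) :=
          mul_le_mul_of_nonneg_left step2 (hLnn σ)
      _ ≤ D σ := step1
  -- the comparison function w
  set ψ : ℝ → ℝ := fun σ => L σ * g (z σ) with hψdef
  have hψcont : ContinuousOn ψ (Icc 0 τ) :=
    hLcont.continuousOn.mul (hgc.comp hzcont fun σ hσ => hznn σ hσ.2)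
  have hψnn : ∀ σ, σ ∈ Icc (0:ℝ) τ → 0 ≤ ψ σ := fun σ hσ =>
    mul_nonneg (hLnn σ) (hgnn _ (hznn σ hσ.2))
  set w : ℝ → ℝ := fun t => a + ∫ σ in (0:ℝ)..t, ψ σ with hwdef
  have hψInt : IntegrableOn ψ (Icc 0 τ) := hψcont.integrableOn_compact isCompact_Icc
  have hDIntOn : ∀ t, t ∈ Icc (0:ℝ) τ → IntegrableOn D (Ioo 0 t) := by
    intro t htt
    have hν : volume (Ioo (0:ℝ) t) < ⊤ := by simp [Real.volume_Ioo]
    refine Integrable.mono' ((integrableOn_const (C := CF) hν.ne))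
      hDmeas.aestronglyMeasurable.restrict
      ((ae_restrict_iff' measurableSet_Ioo).2 (ae_of_all _ fun σ hσ => ?_))
    have hb' := hDbounds σ ⟨hσ.1.le, lt_of_lt_of_le hσ.2 htt.2⟩
    rw [Real.norm_eq_abs, abs_of_nonneg hb'.1]
    exact hb'.2
  have hwge : ∀ t, t ∈ Icc (0:ℝ) τ → a ≤ w t := by
    intro t htt
    simp only [hwdef]
    have h0 : 0 ≤ ∫ σ in (0:ℝ)..t, ψ σ :=
      intervalIntegral.integral_nonneg htt.1
        (fun σ hσ => hψnn σ ⟨hσ.1, le_trans hσ.2 htt.2⟩)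
    linarith
  have hkey : ∀ t, t ∈ Icc (0:ℝ) τ → w t ≤ z t := by
    intro t htt
    rcases htt.1.eq_or_lt with heq | ht0
    · subst heq
      simp only [hwdef]
      rw [intervalIntegral.integral_same, hz0]
      simp
    · rw [hmaster t ⟨ht0, htt.2⟩]
      simp only [hwdef]
      have hmono : (∫ σ in (0:ℝ)..t, ψ σ) ≤ ∫ σ in (0:ℝ)..t, D σ := by
        rw [intervalIntegral.integral_of_le ht0.le, intervalIntegral.integral_of_le ht0.le,
          integral_Ioc_eq_integral_Ioo, integral_Ioc_eq_integral_Ioo]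
        refine setIntegral_mono_on
          (hψInt.mono_set fun σ hσ => ⟨hσ.1.le, le_trans hσ.2.le htt.2⟩)
          (hDIntOn t htt) measurableSet_Ioo fun σ hσ => ?_
        simp only [hψdef]
        exact hDlow σ ⟨hσ.1.le, lt_of_lt_of_le hσ.2 htt.2⟩
      linarith
  have hwcont : ContinuousOn w (Icc 0 τ) := by
    have hprim := intervalIntegral.continuousOn_primitive_interval
      (a := (0:ℝ)) (b := τ) (μ := volume) (f := ψ) (by rwa [uIcc_of_le hτ.le])
    rw [uIcc_of_le hτ.le] at hprim
    simp only [hwdef]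
    exact continuousOn_const.add hprim
  have hwderiv : ∀ x ∈ Ioo (0:ℝ) τ, HasDerivWithinAt w (ψ x) (Ioi x) x := by
    intro x hx
    have h1 : IntervalIntegrable ψ volume 0 x := by
      rw [intervalIntegrable_iff_integrableOn_Ioc_of_le hx.1.le]
      exact hψInt.mono_set fun σ hσ => ⟨hσ.1.le, le_trans hσ.2 hx.2.le⟩
    have h2 : StronglyMeasurableAtFilter ψ (nhds x) volume :=
      (ContinuousOn.stronglyMeasurableAtFilter isOpen_Ioo
        (hψcont.mono Ioo_subset_Icc_self)) x hx
    have h3 : ContinuousAt ψ x :=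
      (hψcont.mono Ioo_subset_Icc_self).continuousAt (Ioo_mem_nhds hx.1 hx.2)
    have h4 := intervalIntegral.integral_hasDerivAt_right h1 h2 h3
    simp only [hwdef]
    exact (h4.const_add a).hasDerivWithinAt
  -- substitution
  have himg : w '' Icc 0 τ ⊆ Ici a := by
    rintro _ ⟨t, htt, rfl⟩
    exact hwge t htt
  have hginv : ContinuousOn (fun s => (g s)⁻¹) (w '' Icc 0 τ) := by
    refine ContinuousOn.mono ?_ himg
    exact (hgc.mono (Ici_subset_Ici.2 hapos.le)).inv₀
      fun s hs => (hgpos s (lt_of_lt_of_le hapos hs)).ne'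
  have hwτa : a ≤ w τ := hwge τ ⟨hτ.le, le_rfl⟩
  have hwτpos : 0 < w τ := lt_of_lt_of_le hapos hwτa
  have hw0 : w 0 = a := by simp [hwdef]
  have hsubst : (∫ x in (0:ℝ)..τ, ψ x * (g (w x))⁻¹) = ∫ s in a..(w τ), (g s)⁻¹ := by
    have hIcc : uIcc (0:ℝ) τ = Icc 0 τ := uIcc_of_le hτ.le
    have h5 := intervalIntegral.integral_comp_smul_deriv'' (f := w) (f' := ψ)
      (g := fun s => (g s)⁻¹)
      (by rwa [hIcc])
      (fun x hx => hwderiv x (by rwa [min_eq_left hτ.le, max_eq_right hτ.le] at hx))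
      (by rwa [hIcc])
      (by rwa [hIcc])
    rw [hw0] at h5
    simpa [smul_eq_mul] using h5
  -- final chain
  have hwτM : w τ ≤ M₂ := by
    have h1 : w τ ≤ z τ := hkey τ ⟨hτ.le, le_rfl⟩
    have h2 : z τ ≤ ‖u τ‖ := by
      rw [hzτ]
      exact le_trans (le_abs_self _) ((u τ).norm_coe_le_norm x₀)
    exact le_trans h1 (le_trans h2 (le_max_left _ _))
  have hI1 : (∫ σ in (0:ℝ)..τ, l σ) = ∫ σ in (0:ℝ)..τ, L σ :=
    intervalIntegral.integral_congr fun σ hσ => by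
      rw [uIcc_of_le hτ.le] at hσ
      simp only [hLdef]
      rw [max_eq_left hσ.1]
  have hI2 : (∫ σ in (0:ℝ)..τ, L σ) ≤ ∫ σ in (0:ℝ)..τ, ψ σ * (g (w σ))⁻¹ := by
    refine intervalIntegral.integral_mono_on hτ.le (hLcont.intervalIntegrable 0 τ) ?_ ?_
    · have hcc : ContinuousOn (fun σ => ψ σ * (g (w σ))⁻¹) (Icc 0 τ) :=
        hψcont.mul (hginv.comp hwcont (mapsTo_image w _))
      rw [← uIcc_of_le hτ.le] at hcc
      exact hcc.intervalIntegrable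
    · intro σ hσ
      have hwa : a ≤ w σ := hwge σ hσ
      have hgw : 0 < g (w σ) := hgpos _ (lt_of_lt_of_le hapos hwa)
      have hzw : w σ ≤ z σ := hkey σ hσ
      have hgz : g (w σ) ≤ g (z σ) :=
        hgmono (mem_Ici.2 (by linarith)) (mem_Ici.2 (hznn σ hσ.2)) hzw
      calc L σ = L σ * g (w σ) * (g (w σ))⁻¹ := by field_simp
        _ ≤ L σ * g (z σ) * (g (w σ))⁻¹ :=
            mul_le_mul_of_nonneg_right (mul_le_mul_of_nonneg_left hgz (hLnn σ))
              (inv_nonneg.2 hgw.le)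
        _ = ψ σ * (g (w σ))⁻¹ := by simp only [hψdef]
  have hI3 : (∫ σ in (0:ℝ)..τ, ψ σ * (g (w σ))⁻¹) = ∫ s in Ioc a (w τ), 1 / g s := by
    rw [hsubst, intervalIntegral.integral_of_le hwτa]
    simp [one_div]
  have hGb : Gf b = ∫ σ in Ioi b, 1 / g σ := by simp only [hGdef]
  have hsplit1 := hGsplit a (w τ) hapos hwτa
  have hsplit2 := hGsplit a b hapos hab
  have hX : Gf (w τ) ≤ ∫ s in Ioc a b, 1 / g s := by linarith [hcond]
  have hIab : (∫ s in Ioc a b, 1 / g s) ≤ (b - a) * (g (b / 2))⁻¹ := by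
    have hvol : volume (Ioc a b) < ⊤ := by simp [Real.volume_Ioc]
    calc (∫ s in Ioc a b, 1 / g s) ≤ ∫ s in Ioc a b, (g (b / 2))⁻¹ := by
          refine setIntegral_mono_on ((hgOsgood a hapos).mono_set Ioc_subset_Ioi_self)
            (integrableOn_const hvol.ne) measurableSet_Ioc fun s hs => ?_
          rw [one_div]
          refine inv_anti₀ hgb2 ?_
          refine hgmono (mem_Ici.2 (by linarith)) (mem_Ici.2 (by linarith [hs.1, hapos])) ?_
          have : b / 2 ≤ a := by linarith [hεb2, hx₀]
          linarith [hs.1]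
      _ = (b - a) * (g (b / 2))⁻¹ := by
          rw [setIntegral_const, smul_eq_mul, measureReal_def, Real.volume_Ioc,
            ENNReal.toReal_ofReal (by linarith : (0:ℝ) ≤ b - a)]
  have hba : b - a ≤ ε := by linarith [hx₀]
  have hfin2 : (b - a) * (g (b / 2))⁻¹ ≤ Gf M₂ / 2 := by
    have h1 : (b - a) * (g (b / 2))⁻¹ ≤ ε * (g (b / 2))⁻¹ :=
      mul_le_mul_of_nonneg_right hba (inv_nonneg.2 hgb2.le)
    have h2 : ε * (g (b / 2))⁻¹ ≤ (g (b / 2) * Gf M₂ / 2) * (g (b / 2))⁻¹ :=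
      mul_le_mul_of_nonneg_right (hεdef ▸ min_le_right _ _) (inv_nonneg.2 hgb2.le)
    have h3 : (g (b / 2) * Gf M₂ / 2) * (g (b / 2))⁻¹ = Gf M₂ / 2 := by
      field_simp
    linarith
  have hfin3 : Gf M₂ ≤ Gf (w τ) := hGanti (w τ) M₂ hwτpos hwτM
  have hGM₂pos : 0 < Gf M₂ := hGpos M₂ hM₂pos
  linarith
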